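/- For n agents with strict preferences over m objects, if m ≥ n + 1 then a weak SD proportional discrete assignment always exists. -/

import Mathlib

open Finset

lemma exists_best {O : Type} [Fintype O] [DecidableEq O] (R : O → O → Prop)
    (htot : ∀ a b, R a b ∨ R b a) (htrans : ∀ a b c, R a b → R b c → R a c)
    (S : Finset O) (hS : S.Nonempty) : ∃ b ∈ S, ∀ a ∈ S, R b a := by
  classical
  obtain ⟨b, hb, hmin⟩ := S.exists_min_image
    (fun a => (Finset.univ.filter (fun o' => R o' a)).card) hS
  refine ⟨b, hb, fun a ha => ?_⟩
  by_contra hba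
  rcases htot a b with hab | hab
  · have hsub : Finset.univ.filter (fun o' => R o' a) ⊆
        Finset.univ.filter (fun o' => R o' b) := by
      intro x hx
      simp only [mem_filter, mem_univ, true_and] at hx ⊢
      exact htrans _ _ _ hx hab
    have hbmem : b ∈ Finset.univ.filter (fun o' => R o' b) := by
      simp only [mem_filter, mem_univ, true_and]
      exact (htot b b).elim id id
    have hbnot : b ∉ Finset.univ.filter (fun o' => R o' a) := by
      simp only [mem_filter, mem_univ, true_and]
      exact hba
    have hlt := Finset.card_lt_card
      ((Finset.ssubset_iff_of_subset hsub).mpr ⟨b, hbmem, hbnot⟩)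
    have := hmin a ha
    omega
  · exact hba hab

def sdRem {O : Type} [Fintype O] [DecidableEq O] (pick : ℕ → Finset O → O) :
    ℕ → Finset O
  | 0 => Finset.univ
  | k + 1 => sdRem pick k \ {pick k (sdRem pick k)}

/-- for strict preferences, if m ≥ n + 1 then a weak SD
proportional discrete assignment exists. -/
theorem stmt_9 {O : Type} [Fintype O] [DecidableEq O] {n : ℕ} (hn : 0 < n)
    (hm : n + 1 ≤ Fintype.card O)
    (r : Fin n → O → O → Prop) [∀ i, DecidableRel (r i)]
    (htot : ∀ i (a b : O), r i a b ∨ r i b a)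
    (htrans : ∀ i (a b c : O), r i a b → r i b c → r i a c)
    (hanti : ∀ i (a b : O), r i a b → r i b a → a = b) :
    ∃ p : Fin n → Finset O, (∀ o : O, ∃! i, o ∈ p i) ∧
      ∀ i, (∃ o : O, (Finset.univ.filter (fun o' => r i o' o)).card <
              ((p i).filter (fun o' => r i o' o)).card * n)
         ∨ (∀ o : O, (Finset.univ.filter (fun o' => r i o' o)).card ≤
              ((p i).filter (fun o' => r i o' o)).card * n) := by
  classical
  have hO : Nonempty O := Fintype.card_pos_iff.mp (by omega)
  have hrefl : ∀ (i : Fin n) a, r i a a := fun i a => (htot i a a).elim id id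
  set pick : ℕ → Finset O → O := fun k S =>
    if h : k < n ∧ S.Nonempty then
      Classical.choose (exists_best (r ⟨k, h.1⟩) (htot _) (htrans _) S h.2)
    else Classical.arbitrary O with hpickdef
  set rem : ℕ → Finset O := sdRem pick with hremdef
  have hrem0 : rem 0 = Finset.univ := rfl
  have hremS : ∀ k, rem (k + 1) = rem k \ {pick k (rem k)} := fun k => rfl
  -- basic pick spec
  have hpick : ∀ (k : ℕ) (hk : k < n), (rem k).Nonempty →
      pick k (rem k) ∈ rem k ∧ ∀ a ∈ rem k, r ⟨k, hk⟩ (pick k (rem k)) a := by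
    intro k hk hne
    have h : k < n ∧ (rem k).Nonempty := ⟨hk, hne⟩
    simp only [hpickdef, dif_pos h]
    exact Classical.choose_spec (exists_best (r ⟨k, h.1⟩) (htot _) (htrans _) _ h.2)
  -- monotonicity
  have hmono : ∀ j k, j ≤ k → rem k ⊆ rem j := by
    intro j k hjk
    induction k, hjk using Nat.le_induction with
    | base => exact Finset.Subset.refl _
    | succ k hjk ih =>
      refine Finset.Subset.trans ?_ ih
      rw [hremS]
      exact Finset.sdiff_subset
  -- complement cardinality
  have hcompl : ∀ k, (Finset.univ \ rem k).card ≤ k := by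
    intro k
    induction k with
    | zero => simp [hrem0]
    | succ k ih =>
      have hsub : Finset.univ \ rem (k + 1) ⊆
          (Finset.univ \ rem k) ∪ {pick k (rem k)} := by
        intro x hx
        rw [hremS] at hx
        simp only [Finset.mem_sdiff, Finset.mem_univ, true_and, Finset.mem_union,
          Finset.mem_singleton] at hx ⊢
        by_cases hxk : x ∈ rem k
        · right
          by_contra hne
          exact hx ⟨hxk, hne⟩
        · left; exact hxk
      calc (Finset.univ \ rem (k + 1)).card
          ≤ ((Finset.univ \ rem k) ∪ {pick k (rem k)}).card := Finset.card_le_card hsub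
        _ ≤ (Finset.univ \ rem k).card + 1 := by
            refine le_trans (Finset.card_union_le _ _) ?_
            simp
        _ ≤ k + 1 := by omega
  have hcard : ∀ k, Fintype.card O ≤ (rem k).card + k := by
    intro k
    have := Finset.card_sdiff_add_card_eq_card (Finset.subset_univ (rem k))
    have h2 := hcompl k
    simp only [Finset.card_univ] at this
    omega
  have hne : ∀ k ≤ n - 1, (rem k).Nonempty := by
    intro k hk
    have := hcard k
    refine Finset.card_pos.mp ?_
    omega
  have hpicknot : ∀ k, pick k (rem k) ∉ rem (k + 1) := by
    intro k
    rw [hremS]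
    simp
  -- picks for distinct steps differ, and pick k ∉ rem j for j > k
  have hpicknot' : ∀ k j, k < j → pick k (rem k) ∉ rem j := by
    intro k j hkj hmem
    exact hpicknot k (hmono (k + 1) j hkj hmem)
  -- the assignment
  set p : Fin n → Finset O := fun i =>
    if i.1 = n - 1 then rem (n - 1) else {pick i.1 (rem i.1)} with hpdef
  refine ⟨p, ?_, ?_⟩
  · -- partition
    intro o
    by_cases ho : o ∈ rem (n - 1)
    · refine ⟨⟨n - 1, by omega⟩, ?_, ?_⟩
      · simp only [hpdef, if_pos rfl]
        exact ho
      · intro j hj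
        by_cases hjl : j.1 = n - 1
        · exact Fin.ext hjl
        · exfalso
          simp only [hpdef, if_neg hjl, Finset.mem_singleton] at hj
          have hjlt : j.1 < n - 1 := by omega
          exact hpicknot' j.1 (n - 1) hjlt (hj ▸ ho)
    · -- find the least step where o got removed
      have hex : ∃ k, o ∉ rem k := ⟨n - 1, ho⟩
      set k0 := Nat.find hex with hk0def
      have hk0 : o ∉ rem k0 := Nat.find_spec hex
      have hk0le : k0 ≤ n - 1 := Nat.find_le ho
      have hk0pos : 0 < k0 := by
        rcases Nat.eq_zero_or_pos k0 with h | h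
        · exfalso; apply hk0; rw [h, hrem0]; exact Finset.mem_univ o
        · exact h
      set k := k0 - 1 with hkdef
      have hkmem : o ∈ rem k := by
        by_contra h
        exact absurd (Nat.find_min hex (show k < k0 by omega)) (fun h' => h' h)
      have hknot : o ∉ rem (k + 1) := by
        have : k + 1 = k0 := by omega
        rw [this]; exact hk0
      have hko : o = pick k (rem k) := by
        rw [hremS] at hknot
        simp only [Finset.mem_sdiff, Finset.mem_singleton, not_and, not_not] at hknot
        exact hknot hkmem
      have hklt : k < n - 1 := by omega
      refine ⟨⟨k, by omega⟩, ?_, ?_⟩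
      · simp only [hpdef, if_neg (show k ≠ n - 1 by omega), Finset.mem_singleton]
        exact hko
      · intro j hj
        by_cases hjl : j.1 = n - 1
        · exfalso
          simp only [hpdef, if_pos hjl, hjl] at hj
          exact ho hj
        · simp only [hpdef, if_neg hjl, Finset.mem_singleton] at hj
          have hjlt : j.1 < n - 1 := by omega
          refine Fin.ext ?_
          show j.1 = k
          by_contra hne'
          rcases Nat.lt_or_ge j.1 k with h | h
          · -- pick j ∉ rem (j+1) ⊇ rem k ∋ o = pick j
            exact hpicknot' j.1 k h (hj ▸ hkmem)
          · have h' : k < j.1 := by omega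
            -- pick j ∈ rem j ⊆ rem (k+1), but o ∉ rem (k+1)
            have hjne : (rem j.1).Nonempty := hne j.1 (by omega)
            have hjmem := (hpick j.1 j.2 hjne).1
            have : o ∈ rem (k + 1) := hj ▸ hmono (k + 1) j.1 h' hjmem
            exact hknot this
  · -- weak SD proportionality
    intro i
    by_cases hil : i.1 = n - 1
    · by_cases hn1 : n = 1
      · -- n = 1 : second disjunct
        right
        intro o
        have hp : p i = Finset.univ := by
          simp only [hpdef, if_pos hil]
          rw [show n - 1 = 0 from by omega]
          exact hrem0
        rw [hp, hn1]
        simp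
      · -- n ≥ 2 : last agent gets ≥ 2 objects, use its second-best one
        left
        have hn2 : 2 ≤ n := by omega
        have hScard : 2 ≤ (rem (n - 1)).card := by
          have := hcard (n - 1)
          omega
        have hSne : (rem (n - 1)).Nonempty := hne _ le_rfl
        have hi : i = ⟨n - 1, by omega⟩ := Fin.ext hil
        obtain ⟨hbmem, hbbest⟩ := hpick (n - 1) (by omega) hSne
        set b := pick (n - 1) (rem (n - 1)) with hbdef
        have hbbest' : ∀ a ∈ rem (n - 1), r i b a := by
          rw [hi]; exact hbbest
        have hS'ne : ((rem (n - 1)).erase b).Nonempty := by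
          rw [← Finset.card_pos, Finset.card_erase_of_mem hbmem]
          omega
        obtain ⟨b2, hb2mem, hb2best⟩ :=
          exists_best (r i) (htot i) (htrans i) _ hS'ne
        have hb2S : b2 ∈ rem (n - 1) := Finset.mem_of_mem_erase hb2mem
        have hb2ne : b2 ≠ b := Finset.ne_of_mem_erase hb2mem
        refine ⟨b2, ?_⟩
        have hp : p i = rem (n - 1) := by simp only [hpdef, if_pos hil]
        -- lower bound on the filter over p i
        have hpair : {b, b2} ⊆ (p i).filter (fun o' => r i o' b2) := by
          intro x hx
          simp only [Finset.mem_insert, Finset.mem_singleton] at hx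
          rw [hp]
          simp only [Finset.mem_filter]
          rcases hx with h | h
          · rw [h]; exact ⟨hbmem, hbbest' b2 hb2S⟩
          · rw [h]; exact ⟨hb2S, hrefl i b2⟩
        have hpairc : ({b, b2} : Finset O).card = 2 := by
          rw [Finset.card_insert_of_notMem (by simpa using (Ne.symm hb2ne)), Finset.card_singleton]
        have hlow : 2 ≤ ((p i).filter (fun o' => r i o' b2)).card := by
          calc 2 = ({b, b2} : Finset O).card := hpairc.symm
            _ ≤ _ := Finset.card_le_card hpair
        -- upper bound on the global filter
        have hup : Finset.univ.filter (fun o' => r i o' b2) ⊆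
            (Finset.univ \ rem (n - 1)) ∪ {b, b2} := by
          intro x hx
          simp only [Finset.mem_filter, Finset.mem_univ, true_and] at hx
          simp only [Finset.mem_union, Finset.mem_sdiff, Finset.mem_univ, true_and,
            Finset.mem_insert, Finset.mem_singleton]
          by_cases hxS : x ∈ rem (n - 1)
          · right
            by_cases hxb : x = b
            · left; exact hxb
            · right
              have hxS' : x ∈ (rem (n - 1)).erase b := Finset.mem_erase.mpr ⟨hxb, hxS⟩
              exact hanti i x b2 hx (hb2best x hxS')
          · left; exact hxS
        have hupc : (Finset.univ.filter (fun o' => r i o' b2)).card ≤ (n - 1) + 2 := by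
          calc (Finset.univ.filter (fun o' => r i o' b2)).card
              ≤ ((Finset.univ \ rem (n - 1)) ∪ {b, b2}).card := Finset.card_le_card hup
            _ ≤ (Finset.univ \ rem (n - 1)).card + ({b, b2} : Finset O).card :=
                Finset.card_union_le _ _
            _ ≤ (n - 1) + 2 := by
                have := hcompl (n - 1)
                omega
        have : 2 * n ≤ ((p i).filter (fun o' => r i o' b2)).card * n :=
          Nat.mul_le_mul_right n hlow
        omega
    · -- non-last agent: gets its best object among those remaining at its turn
      left
      set k := i.1 with hkdef
      have hklt : k < n - 1 := by omega
      have hkne : (rem k).Nonempty := hne k (by omega)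
      obtain ⟨hbmem, hbbest⟩ := hpick k i.2 hkne
      set b := pick k (rem k) with hbdef
      have hi : (⟨k, i.2⟩ : Fin n) = i := Fin.ext rfl
      rw [hi] at hbbest
      refine ⟨b, ?_⟩
      have hp : p i = {b} := by simp only [hpdef]; exact if_neg hil
      have hfilt : (p i).filter (fun o' => r i o' b) = {b} := by
        rw [hp]
        rw [Finset.filter_singleton, if_pos (hrefl i b)]
      have hup : Finset.univ.filter (fun o' => r i o' b) ⊆
          (Finset.univ \ rem k) ∪ {b} := by
        intro x hx
        simp only [Finset.mem_filter, Finset.mem_univ, true_and] at hx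
        simp only [Finset.mem_union, Finset.mem_sdiff, Finset.mem_univ, true_and,
          Finset.mem_singleton]
        by_cases hxS : x ∈ rem k
        · right
          exact hanti i x b hx (hbbest x hxS)
        · left; exact hxS
      have hupc : (Finset.univ.filter (fun o' => r i o' b)).card ≤ k + 1 := by
        calc (Finset.univ.filter (fun o' => r i o' b)).card
            ≤ ((Finset.univ \ rem k) ∪ {b}).card := Finset.card_le_card hup
          _ ≤ (Finset.univ \ rem k).card + 1 := by
              refine le_trans (Finset.card_union_le _ _) ?_
              simp
          _ ≤ k + 1 := by have := hcompl k; omega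
      rw [hfilt]
      simp only [Finset.card_singleton, one_mul]
      omega
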